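/- If ≤ is a linear extension of ≼_I, then there exists an injective x : {1,…,p} → ℝ with x(j) ∈ I_j for all j such that for all j₁, j₂, j₁ ≤ j₂ holds iff x(j₁) ≤ x(j₂). -/

import Mathlib

/-- Recursive construction of points: next point is the max of the interval's left
endpoint and the midpoint between the previous point and the min of the remaining
right endpoints. -/
noncomputable def buildPts (lo M : ℕ → ℝ) : ℕ → ℝ
  | 0 => lo 0
  | (k+1) => max (lo (k+1)) ((buildPts lo M k + M (k+1)) / 2)

/-- If `≤` is a linear extension of `≼_I` (intervals `I_j = [ℓ j, r j]` with
`ℓ j < r j` and 2p pairwise distinct endpoints), then there exists an injective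
`x : {1,…,p} → ℝ` with `x j ∈ I_j` for all `j` such that `j₁ ≤ j₂ ↔ x j₁ ≤ x j₂`. -/
theorem linear_extension_gives_compatible_points (p : ℕ) (hp : 1 ≤ p)
    (ℓ r : Fin p → ℝ) (hlr : ∀ j, ℓ j < r j)
    (hdist : Function.Injective (Sum.elim ℓ r : Fin p ⊕ Fin p → ℝ))
    (le : Fin p → Fin p → Prop) (hlin : IsLinearOrder (Fin p) le)
    (hext : ∀ j₁ j₂ : Fin p, (r j₁ < ℓ j₂ ∨ j₁ = j₂) → le j₁ j₂) :
    ∃ x : Fin p → ℝ, Function.Injective x ∧ (∀ j, x j ∈ Set.Icc (ℓ j) (r j)) ∧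
      ∀ j₁ j₂ : Fin p, le j₁ j₂ ↔ x j₁ ≤ x j₂ := by
  classical
  have le_refl' : ∀ a, le a a := fun a => hext a a (Or.inr rfl)
  have le_trans' : ∀ a b c, le a b → le b c → le a c := fun a b c h1 h2 =>
    hlin.toIsPartialOrder.toIsPreorder.toIsTrans.trans a b c h1 h2
  have le_antisymm' : ∀ a b, le a b → le b a → a = b := fun a b h1 h2 =>
    hlin.toIsPartialOrder.toAntisymm.antisymm a b h1 h2
  have le_total' : ∀ a b, le a b ∨ le b a := fun a b => hlin.toTotal.total a b
  let L : LinearOrder (Fin p) :=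
    { le := le
      lt := fun a b => le a b ∧ ¬ le b a
      lt_iff_le_not_ge := fun _ _ => Iff.rfl
      le_refl := le_refl'
      le_trans := le_trans'
      le_antisymm := le_antisymm'
      le_total := le_total'
      toDecidableLE := fun a b => Classical.dec _
      toDecidableEq := fun a b => instDecidableEqFin p a b
      toDecidableLT := fun a b => Classical.dec _
      toMin := @minOfLe _ ⟨le⟩ (fun a b => Classical.dec _)
      toMax := @maxOfLe _ ⟨le⟩ (fun a b => Classical.dec _)
      compare := fun a b => @compareOfLessAndEq _ a b ⟨fun a b => le a b ∧ ¬ le b a⟩ (Classical.dec _) (fun a b => instDecidableEqFin p a b)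
      compare_eq_compareOfLessAndEq := fun a b => rfl }
  have hcard : @Fintype.card (Fin p) _ = p := Fintype.card_fin p
  let e := @monoEquivOfFin (Fin p) _ L p hcard
  have he : ∀ a b : Fin p, a ≤ b ↔ le (e a) (e b) := fun a b =>
    (@OrderIso.le_iff_le (Fin p) (Fin p) _ L.toLE e a b).symm
  obtain ⟨f, hf⟩ : ∃ f : Fin p ≃ Fin p, ∀ a b : Fin p, a ≤ b ↔ le (f a) (f b) :=
    ⟨e.toEquiv, he⟩
  clear_value e
  clear he
  -- key fact: if le (f a) (f b) then ℓ (f a) < r (f b)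
  have key : ∀ a b : Fin p, a ≤ b → ℓ (f a) < r (f b) := by
    intro a b hab
    have hle : le (f a) (f b) := (hf a b).mp hab
    rcases lt_trichotomy (ℓ (f a)) (r (f b)) with h | h | h
    · exact h
    · exfalso
      have := hdist (show (Sum.elim ℓ r) (Sum.inl (f a)) = (Sum.elim ℓ r) (Sum.inr (f b)) by
        simpa using h)
      simp at this
    · exfalso
      have hba : le (f b) (f a) := hext _ _ (Or.inl h)
      have : f b = f a := le_antisymm' _ _ hba hle
      rw [this] at h
      exact absurd (hlr (f a)) (not_lt.mpr h.le)
  -- coercion ℕ → Fin p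
  let fc : ℕ → Fin p := fun k => if h : k < p then ⟨k, h⟩ else ⟨0, hp⟩
  have hfc : ∀ k (h : k < p), fc k = ⟨k, h⟩ := by
    intro k h; simp only [fc, dif_pos h]
  let lo : ℕ → ℝ := fun k => ℓ (f (fc k))
  let Mf : ℕ → ℝ := fun k => (Finset.Ici (fc k)).inf' Finset.nonempty_Ici (fun m => r (f m))
  have hloM : ∀ k, lo k < Mf k := by
    intro k
    rw [Finset.lt_inf'_iff]
    intro m hm
    exact key _ _ (Finset.mem_Ici.mp hm)
  have hMle : ∀ k, k + 1 < p → Mf k ≤ Mf (k+1) := by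
    intro k h
    have hsub : Finset.Ici (fc (k+1)) ⊆ Finset.Ici (fc k) := by
      intro m hm
      apply Finset.mem_Ici.mpr
      refine le_trans ?_ (Finset.mem_Ici.mp hm)
      rw [hfc k (Nat.lt_of_succ_lt h), hfc (k+1) h]
      exact Fin.mk_le_mk.mpr (Nat.le_succ k)
    exact Finset.inf'_mono (f := fun m => r (f m)) hsub Finset.nonempty_Ici
  set y : ℕ → ℝ := buildPts lo Mf with hy
  -- invariant: y k < Mf k, for k < p
  have inv : ∀ k, k < p → y k < Mf k := by
    intro k
    induction k with
    | zero => intro _; exact hloM 0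
    | succ k ih =>
      intro hk1
      have ihk := ih (Nat.lt_of_succ_lt hk1)
      have hM := hMle k hk1
      show max (lo (k+1)) ((y k + Mf (k+1)) / 2) < Mf (k+1)
      apply max_lt (hloM (k+1))
      linarith
  have incr : ∀ k, k + 1 < p → y k < y (k+1) := by
    intro k hk1
    have h1 : y k < Mf (k+1) := lt_of_lt_of_le (inv k (Nat.lt_of_succ_lt hk1)) (hMle k hk1)
    have h2 : (y k + Mf (k+1)) / 2 ≤ y (k+1) := le_max_right _ _
    linarith
  -- strict monotonicity below p
  have mono2 : ∀ b a, a < b → b < p → y a < y b := by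
    intro b
    induction b with
    | zero => intro a ha _; exact absurd ha (Nat.not_lt_zero a)
    | succ b ih =>
      intro a ha hb
      rcases Nat.lt_succ_iff_lt_or_eq.mp ha with h | h
      · exact lt_trans (ih a h (Nat.lt_of_succ_lt hb)) (incr b hb)
      · subst h; exact incr a hb
  have hlo : ∀ k, lo k ≤ y k := by
    intro k
    cases k with
    | zero => exact le_of_eq rfl
    | succ k => exact le_max_left _ _
  have hhi : ∀ k, k < p → y k ≤ r (f (fc k)) := by
    intro k hk
    refine le_of_lt (lt_of_lt_of_le (inv k hk) ?_)
    exact Finset.inf'_le _ (Finset.mem_Ici.mpr (le_refl _))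
  -- final construction
  refine ⟨fun j => y ((f.symm j : Fin p) : ℕ), ?_, ?_, ?_⟩
  · intro a b hab
    have hab' : y ((f.symm a : Fin p) : ℕ) = y ((f.symm b : Fin p) : ℕ) := hab
    by_contra hne
    have hne' : ((f.symm a : Fin p) : ℕ) ≠ ((f.symm b : Fin p) : ℕ) := by
      intro h
      exact hne (f.symm.injective (Fin.ext h))
    rcases Nat.lt_or_ge ((f.symm a : Fin p) : ℕ) ((f.symm b : Fin p) : ℕ) with h | h
    · have := mono2 _ _ h (f.symm b).isLt
      rw [hab'] at this
      exact lt_irrefl _ this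
    · have h' : ((f.symm b : Fin p) : ℕ) < ((f.symm a : Fin p) : ℕ) := lt_of_le_of_ne h (Ne.symm hne')
      have := mono2 _ _ h' (f.symm a).isLt
      rw [hab'] at this
      exact lt_irrefl _ this
  · intro j
    have hk : ((f.symm j : Fin p) : ℕ) < p := (f.symm j).isLt
    have hfcj : fc ((f.symm j : Fin p) : ℕ) = f.symm j := by
      rw [hfc _ hk]
    have hej : f (fc ((f.symm j : Fin p) : ℕ)) = j := by
      rw [hfcj]; exact f.apply_symm_apply j
    constructor
    · have := hlo ((f.symm j : Fin p) : ℕ)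
      simpa only [lo, hej] using this
    · have := hhi ((f.symm j : Fin p) : ℕ) hk
      simpa only [hej] using this
  · intro j₁ j₂
    have h1 : le j₁ j₂ ↔ f.symm j₁ ≤ f.symm j₂ := by
      have := hf (f.symm j₁) (f.symm j₂)
      rw [f.apply_symm_apply, f.apply_symm_apply] at this
      exact this.symm
    rw [h1]
    constructor
    · intro h
      show y ((f.symm j₁ : Fin p) : ℕ) ≤ y ((f.symm j₂ : Fin p) : ℕ)
      rcases eq_or_lt_of_le h with h' | h'
      · rw [h']
      · exact le_of_lt (mono2 _ _ (by exact_mod_cast h') (f.symm j₂).isLt)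
    · intro h
      have h'' : y ((f.symm j₁ : Fin p) : ℕ) ≤ y ((f.symm j₂ : Fin p) : ℕ) := h
      by_contra hcon
      have hle2 : ¬ ((f.symm j₁ : Fin p) : ℕ) ≤ ((f.symm j₂ : Fin p) : ℕ) := by
        exact fun hnat => hcon (Fin.le_def.mpr hnat)
      have h' : ((f.symm j₂ : Fin p) : ℕ) < ((f.symm j₁ : Fin p) : ℕ) := by omega
      have := mono2 _ _ h' (f.symm j₁).isLt
      exact absurd h'' (not_le.mpr this)
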